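/- Let n ≥ 1 and let 0 ≤ i ≤ j ≤ n with i + j > n and i + 2j ≤ 2n (equivalently i/2 + j ≤ n). Then there exists a nonzero function f : Σ_3^n → ℝ in U_{[i,j]}(n,3) whose support has cardinality exactly 2^{3(n−j)−i} · 3^{i+j−n}. -/

import Mathlib

/-- `f` belongs to the eigenspace `U_k(n,q)` of the Hamming graph `H(n,q)`,
i.e. `λ_k(n,q) · f(x) = Σ_{y ∈ N(x)} f(y)` for every vertex `x`, where
`λ_k(n,q) = n(q-1) - q·k` and `N(x)` is the set of vertices at Hamming distance 1 from `x`. -/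
def inU (n q k : ℕ) (f : (Fin n → Fin q) → ℝ) : Prop :=
  ∀ x : Fin n → Fin q,
    ((n : ℝ) * ((q : ℝ) - 1) - (q : ℝ) * (k : ℝ)) * f x =
      ∑ y ∈ Finset.univ.filter (fun y : Fin n → Fin q => hammingDist x y = 1), f y

/-- `f` belongs to the direct sum `U_{[i,j]}(n,q) = U_i(n,q) ⊕ … ⊕ U_j(n,q)`,
i.e. `f = Σ_{k=i}^{j} g_k` with `g_k ∈ U_k(n,q)`. -/
def inUIJ (n q i j : ℕ) (f : (Fin n → Fin q) → ℝ) : Prop :=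
  ∃ g : ℕ → (Fin n → Fin q) → ℝ,
    (∀ k ∈ Finset.Icc i j, inU n q k (g k)) ∧ f = ∑ k ∈ Finset.Icc i j, g k

/-- The cardinality of the support of `f`. -/
noncomputable def suppCard (n q : ℕ) (f : (Fin n → Fin q) → ℝ) : ℕ :=
  (Finset.univ.filter (fun x : Fin n → Fin q => f x ≠ 0)).card


lemma filter_update_eq {n : ℕ} (x : Fin n → Fin 3) (s : Fin n) (v : Fin 3) (hv : v ≠ x s) :
    (Finset.univ.filter fun t => x t ≠ Function.update x s v t) = {s} := by
  ext t
  simp only [Finset.mem_filter, Finset.mem_univ, true_and, Finset.mem_singleton,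
    Function.update_apply]
  rcases eq_or_ne t s with h | h
  · subst h; simp [Ne.symm hv]
  · simp [h]

lemma hamming_update_eq_one {n : ℕ} (x : Fin n → Fin 3) (s : Fin n) (v : Fin 3) (hv : v ≠ x s) :
    hammingDist x (Function.update x s v) = 1 := by
  simp [hammingDist, filter_update_eq x s v hv]

lemma sum_neighbors {n : ℕ} (f : (Fin n → Fin 3) → ℝ) (x : Fin n → Fin 3) :
    ∑ y ∈ Finset.univ.filter (fun y : Fin n → Fin 3 => hammingDist x y = 1), f y
      = ∑ s : Fin n, ∑ v ∈ Finset.univ.filter (fun v => v ≠ x s), f (Function.update x s v) := by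
  rw [Finset.sum_sigma']
  refine (Finset.sum_bij (fun p _ => Function.update x p.1 p.2) ?_ ?_ ?_ ?_).symm
  · rintro ⟨s, v⟩ hp
    simp only [Finset.mem_sigma, Finset.mem_univ, Finset.mem_filter, true_and] at hp ⊢
    exact hamming_update_eq_one x s v hp
  · rintro ⟨s, v⟩ hp ⟨s', v'⟩ hp' h
    simp only [Finset.mem_sigma, Finset.mem_univ, Finset.mem_filter, true_and] at hp hp'
    dsimp only at h
    rcases eq_or_ne s s' with hss | hss
    · subst hss
      have := congrFun h s
      simp only [Function.update_self] at this
      subst this; rfl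
    · exfalso
      have h1 := congrFun h s
      simp only [Function.update_self, Function.update_of_ne hss] at h1
      exact hp h1
  · intro y hy
    simp only [Finset.mem_filter, Finset.mem_univ, true_and] at hy
    obtain ⟨s, hs⟩ := Finset.card_eq_one.mp hy
    have hmem : ∀ t, (x t ≠ y t) ↔ t = s := by
      intro t
      rw [← Finset.mem_singleton, ← hs]
      simp
    refine ⟨⟨s, y s⟩, ?_, ?_⟩
    · simp only [Finset.mem_sigma, Finset.mem_univ, Finset.mem_filter, true_and]
      exact fun h => ((hmem s).mpr rfl) h.symm
    · dsimp only
      funext t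
      rcases eq_or_ne t s with rfl | ht
      · simp
      · rw [Function.update_of_ne ht]
        by_contra hne
        exact ht ((hmem t).mp hne)
  · intros; rfl

def lhalf {n1 n2 : ℕ} (x : Fin (n1 + n2) → Fin 3) : Fin n1 → Fin 3 := fun s => x (Fin.castAdd n2 s)
def rhalf {n1 n2 : ℕ} (x : Fin (n1 + n2) → Fin 3) : Fin n2 → Fin 3 := fun s => x (Fin.natAdd n1 s)

def tensor {n1 n2 : ℕ} (F : (Fin n1 → Fin 3) → ℝ) (G : (Fin n2 → Fin 3) → ℝ) :
    (Fin (n1 + n2) → Fin 3) → ℝ := fun x => F (lhalf x) * G (rhalf x)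

lemma lhalf_update_cast {n1 n2 : ℕ} (x : Fin (n1 + n2) → Fin 3) (s : Fin n1) (v : Fin 3) :
    lhalf (Function.update x (Fin.castAdd n2 s) v) = Function.update (lhalf x) s v := by
  funext t
  simp only [lhalf, Function.update_apply]
  by_cases h : t = s
  · subst h; simp
  · rw [if_neg h, if_neg (fun hc => h (Fin.castAdd_injective n1 n2 hc))]

lemma rhalf_update_cast {n1 n2 : ℕ} (x : Fin (n1 + n2) → Fin 3) (s : Fin n1) (v : Fin 3) :
    rhalf (Function.update x (Fin.castAdd n2 s) v) = rhalf x := by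
  funext t
  have : Fin.natAdd n1 t ≠ Fin.castAdd n2 s := by
    simp only [ne_eq, Fin.ext_iff, Fin.coe_natAdd, Fin.coe_castAdd]
    omega
  simp [rhalf, Function.update_of_ne this]

lemma rhalf_update_nat {n1 n2 : ℕ} (x : Fin (n1 + n2) → Fin 3) (s : Fin n2) (v : Fin 3) :
    rhalf (Function.update x (Fin.natAdd n1 s) v) = Function.update (rhalf x) s v := by
  funext t
  simp only [rhalf, Function.update_apply]
  by_cases h : t = s
  · subst h; simp
  · have hinj : Fin.natAdd n1 t ≠ Fin.natAdd n1 s := by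
      simp only [ne_eq, Fin.ext_iff, Fin.coe_natAdd]
      exact fun hc => h (Fin.ext (by omega))
    rw [if_neg h, if_neg hinj]

lemma lhalf_update_nat {n1 n2 : ℕ} (x : Fin (n1 + n2) → Fin 3) (s : Fin n2) (v : Fin 3) :
    lhalf (Function.update x (Fin.natAdd n1 s) v) = lhalf x := by
  funext t
  have : Fin.castAdd n2 t ≠ Fin.natAdd n1 s := by
    simp only [ne_eq, Fin.ext_iff, Fin.coe_natAdd, Fin.coe_castAdd]
    omega
  simp [lhalf, Function.update_of_ne this]

lemma inU_tensor {n1 n2 k1 k2 : ℕ} {F : (Fin n1 → Fin 3) → ℝ} {G : (Fin n2 → Fin 3) → ℝ}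
    (hF : inU n1 3 k1 F) (hG : inU n2 3 k2 G) :
    inU (n1 + n2) 3 (k1 + k2) (tensor F G) := by
  intro x
  rw [sum_neighbors, Fin.sum_univ_add]
  have e1 : ∀ s : Fin n1, ∀ v ∈ Finset.univ.filter (fun v => v ≠ x (Fin.castAdd n2 s)),
      tensor F G (Function.update x (Fin.castAdd n2 s) v)
        = F (Function.update (lhalf x) s v) * G (rhalf x) := by
    intro s v _
    rw [tensor, lhalf_update_cast, rhalf_update_cast]
  have e2 : ∀ s : Fin n2, ∀ v ∈ Finset.univ.filter (fun v => v ≠ x (Fin.natAdd n1 s)),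
      tensor F G (Function.update x (Fin.natAdd n1 s) v)
        = F (lhalf x) * G (Function.update (rhalf x) s v) := by
    intro s v _
    rw [tensor, lhalf_update_nat, rhalf_update_nat]
  calc ((↑(n1 + n2) : ℝ) * ((3:ℕ) - 1) - (3:ℕ) * (↑(k1 + k2))) * tensor F G x
      = ((n1 : ℝ) * ((3:ℕ) - 1) - (3:ℕ) * k1) * F (lhalf x) * G (rhalf x)
        + F (lhalf x) * (((n2 : ℝ) * ((3:ℕ) - 1) - (3:ℕ) * k2) * G (rhalf x)) := by
        rw [tensor]; push_cast; ring
    _ = (∑ y ∈ Finset.univ.filter (fun y : Fin n1 → Fin 3 => hammingDist (lhalf x) y = 1), F y)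
          * G (rhalf x)
        + F (lhalf x) * (∑ y ∈ Finset.univ.filter
            (fun y : Fin n2 → Fin 3 => hammingDist (rhalf x) y = 1), G y) := by
        rw [hF (lhalf x), hG (rhalf x)]
    _ = _ := by
        rw [sum_neighbors F (lhalf x), sum_neighbors G (rhalf x), Finset.sum_mul,
          Finset.mul_sum]
        congr 1
        · exact Finset.sum_congr rfl fun s _ => by
            rw [Finset.sum_mul]
            exact (Finset.sum_congr rfl (e1 s)).symm
        · exact Finset.sum_congr rfl fun s _ => by
            rw [Finset.mul_sum]
            exact (Finset.sum_congr rfl (e2 s)).symm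

def glue {n1 n2 : ℕ} (u : Fin n1 → Fin 3) (v : Fin n2 → Fin 3) : Fin (n1 + n2) → Fin 3 :=
  fun s => Fin.addCases (motive := fun _ => Fin 3) u v s

lemma lhalf_glue {n1 n2 : ℕ} (u : Fin n1 → Fin 3) (v : Fin n2 → Fin 3) : lhalf (glue u v) = u := by
  funext s; simp [lhalf, glue]

lemma rhalf_glue {n1 n2 : ℕ} (u : Fin n1 → Fin 3) (v : Fin n2 → Fin 3) : rhalf (glue u v) = v := by
  funext s; simp [rhalf, glue]

lemma glue_halves {n1 n2 : ℕ} (y : Fin (n1 + n2) → Fin 3) : glue (lhalf y) (rhalf y) = y := by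
  funext s
  refine Fin.addCases (motive := fun s => glue (lhalf y) (rhalf y) s = y s) ?_ ?_ s
  · intro t; simp [glue, lhalf]
  · intro t; simp [glue, rhalf]

lemma suppCard_tensor {n1 n2 : ℕ} (F : (Fin n1 → Fin 3) → ℝ) (G : (Fin n2 → Fin 3) → ℝ) :
    suppCard (n1 + n2) 3 (tensor F G) = suppCard n1 3 F * suppCard n2 3 G := by
  classical
  rw [suppCard, suppCard, suppCard, ← Finset.card_product]
  apply Finset.card_bij (fun y _ => (lhalf y, rhalf y))
  · intro y hy
    simp only [Finset.mem_filter_univ, Finset.mem_filter, Finset.mem_univ, true_and, tensor] at hy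
    simp only [Finset.mem_product, Finset.mem_filter, Finset.mem_univ, true_and]
    have hy2 : F (lhalf y) * G (rhalf y) ≠ 0 := (Finset.mem_filter.mp hy).2
    exact ⟨left_ne_zero_of_mul hy2, right_ne_zero_of_mul hy2⟩
  · intro y hy y' hy' h
    have h1 := congrArg Prod.fst h
    have h2 := congrArg Prod.snd h
    dsimp only at h1 h2
    rw [← glue_halves y, ← glue_halves y', h1, h2]
  · intro p hp
    simp only [Finset.mem_product, Finset.mem_filter, Finset.mem_univ, true_and] at hp
    refine ⟨glue p.1 p.2, ?_, ?_⟩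
    · simp only [Finset.mem_filter_univ, Finset.mem_filter, Finset.mem_univ, true_and, tensor, lhalf_glue, rhalf_glue]
      exact Finset.mem_filter.mpr ⟨Finset.mem_univ _, by rw [lhalf_glue, rhalf_glue]; exact mul_ne_zero hp.1 hp.2⟩
    · simp [lhalf_glue, rhalf_glue]

lemma inU_ofInt {n k : ℕ} (fI : (Fin n → Fin 3) → ℤ) (L : ℤ)
    (hL : (n : ℝ) * ((3 : ℝ) - 1) - 3 * (k : ℝ) = (L : ℝ))
    (h : ∀ x, L * fI x =
      ∑ y ∈ Finset.univ.filter (fun y : Fin n → Fin 3 => hammingDist x y = 1), fI y) :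
    inU n 3 k (fun x => ((fI x : ℤ) : ℝ)) := by
  intro x
  have hx := h x
  have : ((n : ℝ) * (((3:ℕ) : ℝ) - 1) - ((3:ℕ) : ℝ) * (k : ℝ)) * ((fI x : ℤ) : ℝ)
      = ((L * fI x : ℤ) : ℝ) := by
    push_cast
    rw [hL]
  rw [this, hx]
  push_cast
  rfl

lemma suppCard_ofInt {n : ℕ} (fI : (Fin n → Fin 3) → ℤ) :
    suppCard n 3 (fun x => ((fI x : ℤ) : ℝ))
      = (Finset.univ.filter (fun x => fI x ≠ 0)).card := by
  rw [suppCard]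
  congr 1
  apply Finset.filter_congr
  intro x _
  simp

def XInt : (Fin 2 → Fin 3) → ℤ := fun x =>
  if x 1 = 0 ∧ (x 0 = 0 ∨ x 0 = 2) then 1 else if x 0 = 1 ∧ x 1 ≠ 0 then -1 else 0

def YInt : (Fin 3 → Fin 3) → ℤ := fun x =>
  if x 0 = x 1 ∧ x 1 = x 2 then 1 else if x 0 = x 2 + 1 ∧ x 1 = x 2 + 2 then -1 else 0

def u0Int : (Fin 1 → Fin 3) → ℤ := fun _ => 1
def u1Int : (Fin 1 → Fin 3) → ℤ := fun x => if x 0 = 0 then 2 else -1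
def d3Int : (Fin 1 → Fin 3) → ℤ := fun x => if x 0 = 0 then 3 else 0

noncomputable def Xg : (Fin 2 → Fin 3) → ℝ := fun x => ((XInt x : ℤ) : ℝ)
noncomputable def Yg : (Fin 3 → Fin 3) → ℝ := fun x => ((YInt x : ℤ) : ℝ)
noncomputable def u0g : (Fin 1 → Fin 3) → ℝ := fun x => ((u0Int x : ℤ) : ℝ)
noncomputable def u1g : (Fin 1 → Fin 3) → ℝ := fun x => ((u1Int x : ℤ) : ℝ)
noncomputable def d3g : (Fin 1 → Fin 3) → ℝ := fun x => ((d3Int x : ℤ) : ℝ)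

set_option maxRecDepth 100000 in
lemma Xg_inU : inU 2 3 1 Xg := inU_ofInt XInt 1 (by norm_num) (by decide)

set_option maxRecDepth 100000 in
lemma Yg_inU : inU 3 3 2 Yg := inU_ofInt YInt 0 (by norm_num) (by decide)

set_option maxRecDepth 100000 in
lemma u0g_inU : inU 1 3 0 u0g := inU_ofInt u0Int 2 (by norm_num) (by decide)

set_option maxRecDepth 100000 in
lemma u1g_inU : inU 1 3 1 u1g := inU_ofInt u1Int (-1) (by norm_num) (by decide)

set_option maxRecDepth 100000 in
lemma Xg_supp : suppCard 2 3 Xg = 4 := by rw [show Xg = fun x => ((XInt x : ℤ) : ℝ) from rfl, suppCard_ofInt]; decide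

set_option maxRecDepth 100000 in
lemma Yg_supp : suppCard 3 3 Yg = 6 := by rw [show Yg = fun x => ((YInt x : ℤ) : ℝ) from rfl, suppCard_ofInt]; decide

set_option maxRecDepth 100000 in
lemma d3g_supp : suppCard 1 3 d3g = 1 := by rw [show d3g = fun x => ((d3Int x : ℤ) : ℝ) from rfl, suppCard_ofInt]; decide

lemma d3_split : ∀ x : Fin 1 → Fin 3, d3g x = u0g x + u1g x := by
  intro x
  by_cases h : x 0 = 0 <;> simp [d3g, u0g, u1g, d3Int, u0Int, u1Int, h] <;> norm_num

-- zero function is in every eigenspace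
lemma inU_zero {n k : ℕ} : inU n 3 k (fun _ => 0) := by
  intro x; simp

lemma inU_add {n k : ℕ} {F G : (Fin n → Fin 3) → ℝ} (hF : inU n 3 k F) (hG : inU n 3 k G) :
    inU n 3 k (fun x => F x + G x) := by
  intro x
  have := hF x
  have := hG x
  simp only [Finset.sum_add_distrib]
  nlinarith [hF x, hG x]

def STMT (n i j S : ℕ) : Prop :=
  ∃ F : (Fin n → Fin 3) → ℝ, inUIJ n 3 i j F ∧ suppCard n 3 F = S

lemma stmt_base : STMT 3 2 2 6 := by
  refine ⟨Yg, ⟨fun _ => Yg, ?_, ?_⟩, Yg_supp⟩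
  · intro k hk
    simp only [Finset.mem_Icc] at hk
    have : k = 2 := by omega
    subst this
    exact Yg_inU
  · rw [show Finset.Icc 2 2 = {2} from rfl, Finset.sum_singleton]

lemma stmt_stepPure {n i j S w k SG : ℕ} (G : (Fin w → Fin 3) → ℝ)
    (hG : inU w 3 k G) (hsG : suppCard w 3 G = SG) (h : STMT n i j S) :
    STMT (n + w) (i + k) (j + k) (S * SG) := by
  obtain ⟨F, ⟨g, hg, hsum⟩, hsupp⟩ := h
  refine ⟨tensor F G, ⟨fun m => tensor (g (m - k)) G, ?_, ?_⟩, ?_⟩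
  · intro m hm
    simp only [Finset.mem_Icc] at hm
    have h1 : m - k ∈ Finset.Icc i j := by simp only [Finset.mem_Icc]; omega
    have h2 := inU_tensor (hg (m - k) h1) hG
    have h3 : m - k + k = m := by omega
    rwa [h3] at h2
  · funext x
    rw [Finset.sum_apply]
    have : ∀ m ∈ Finset.Icc (i + k) (j + k), tensor (g (m - k)) G x
        = g (m - k) (lhalf x) * G (rhalf x) := fun m _ => rfl
    rw [Finset.sum_congr rfl this]
    rw [show Finset.Icc (i + k) (j + k) = (Finset.Icc i j).map (addRightEmbedding k) from
      (Finset.map_add_right_Icc i j k).symm, Finset.sum_map]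
    have e : ∀ m ∈ Finset.Icc i j,
        g (addRightEmbedding k m - k) (lhalf x) * G (rhalf x)
          = g m (lhalf x) * G (rhalf x) := by
      intro m _
      congr 2
      simp [addRightEmbedding]
    rw [Finset.sum_congr rfl e, ← Finset.sum_mul]
    have : F (lhalf x) = ∑ m ∈ Finset.Icc i j, g m (lhalf x) := by
      rw [hsum, Finset.sum_apply]
    rw [tensor, this]
  · rw [suppCard_tensor, hsupp, hsG]

lemma stmt_stepDelta {n i j S : ℕ} (hi : 1 ≤ i) (hij : i ≤ j) (h : STMT n i j S) :
    STMT (n + 1) i (j + 1) S := by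
  classical
  obtain ⟨F, ⟨g, hg, hsum⟩, hsupp⟩ := h
  set gh : ℕ → (Fin n → Fin 3) → ℝ := fun m => if m ∈ Finset.Icc i j then g m else fun _ => 0
    with hgh
  have gh_pos : ∀ m, m ∈ Finset.Icc i j → gh m = g m := by
    intro m hm; rw [hgh]; simp only [if_pos hm]
  have gh_neg : ∀ m, m ∉ Finset.Icc i j → gh m = fun _ => 0 := by
    intro m hm; rw [hgh]; simp only [if_neg hm]
  have ghU : ∀ m, inU n 3 m (gh m) := by
    intro m
    by_cases hm : m ∈ Finset.Icc i j
    · rw [gh_pos m hm]; exact hg m hm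
    · rw [gh_neg m hm]; exact inU_zero
  have ghsum : ∀ (x : Fin n → Fin 3) (s : Finset ℕ), s = Finset.Icc i j →
      ∑ m ∈ s, gh m x = F x := by
    intro x s hs
    subst hs
    rw [hsum, Finset.sum_apply]
    refine Finset.sum_congr rfl fun m hm => by rw [gh_pos m hm]
  refine ⟨tensor F d3g,
    ⟨fun m => fun x => tensor (gh m) u0g x + tensor (gh (m - 1)) u1g x, ?_, ?_⟩, ?_⟩
  · intro m hm
    simp only [Finset.mem_Icc] at hm
    apply inU_add
    · have := inU_tensor (ghU m) u0g_inU
      simpa using this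
    · have := inU_tensor (ghU (m - 1)) u1g_inU
      have e : m - 1 + 1 = m := by omega
      rwa [e] at this
  · funext x
    rw [Finset.sum_apply]
    have expand : ∀ m ∈ Finset.Icc i (j + 1),
        (tensor (gh m) u0g x + tensor (gh (m - 1)) u1g x)
          = gh m (lhalf x) * u0g (rhalf x) + gh (m - 1) (lhalf x) * u1g (rhalf x) :=
      fun m _ => rfl
    rw [Finset.sum_congr rfl expand, Finset.sum_add_distrib, ← Finset.sum_mul, ← Finset.sum_mul]
    have sA : ∑ m ∈ Finset.Icc i (j + 1), gh m (lhalf x) = F (lhalf x) := by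
      rw [← ghsum (lhalf x) (Finset.Icc i j) rfl]
      refine (Finset.sum_subset (Finset.Icc_subset_Icc_right (by omega)) ?_).symm
      intro m _ hm
      rw [gh_neg m hm]
    have sB : ∑ m ∈ Finset.Icc i (j + 1), gh (m - 1) (lhalf x) = F (lhalf x) := by
      rw [show Finset.Icc i (j + 1) = (Finset.Icc (i-1) j).map (addRightEmbedding 1) from by
        rw [Finset.map_add_right_Icc]; congr 1 <;> omega, Finset.sum_map]
      have e : ∀ m ∈ Finset.Icc (i-1) j, gh (addRightEmbedding 1 m - 1) (lhalf x)
          = gh m (lhalf x) := by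
        intro m _
        have harE : addRightEmbedding 1 m - 1 = m := by
          simp [addRightEmbedding]
        rw [harE]
      rw [Finset.sum_congr rfl e, ← ghsum (lhalf x) (Finset.Icc i j) rfl]
      refine (Finset.sum_subset (Finset.Icc_subset_Icc_left (by omega)) ?_).symm
      intro m hm1 hm
      rw [gh_neg m hm]
    rw [sA, sB, ← mul_add, ← d3_split (rhalf x)]
    rfl
  · rw [suppCard_tensor, hsupp, d3g_supp, mul_one]

lemma chainA : ∀ A : ℕ, STMT (3 * A + 3) (2 * A + 2) (2 * A + 2) (6 ^ (A + 1)) := by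
  intro A
  induction A with
  | zero => simpa using stmt_base
  | succ A ih =>
    have := stmt_stepPure Yg Yg_inU Yg_supp ih
    have e1 : 3 * A + 3 + 3 = 3 * (A + 1) + 3 := by ring
    have e2 : 2 * A + 2 + 2 = 2 * (A + 1) + 2 := by ring
    have e3 : 6 ^ (A + 1) * 6 = 6 ^ (A + 1 + 1) := (pow_succ 6 (A + 1)).symm
    rwa [e1, e2, e3] at this

lemma chainP : ∀ A P : ℕ,
    STMT (3 * A + 3 + 2 * P) (2 * A + 2 + P) (2 * A + 2 + P) (6 ^ (A + 1) * 4 ^ P) := by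
  intro A P
  induction P with
  | zero => simpa using chainA A
  | succ P ih =>
    have := stmt_stepPure Xg Xg_inU Xg_supp ih
    have e1 : 3 * A + 3 + 2 * P + 2 = 3 * A + 3 + 2 * (P + 1) := by ring
    have e2 : 2 * A + 2 + P + 1 = 2 * A + 2 + (P + 1) := by ring
    have e3 : 6 ^ (A + 1) * 4 ^ P * 4 = 6 ^ (A + 1) * 4 ^ (P + 1) := by
      rw [mul_assoc, ← pow_succ]
    rwa [e1, e2, e3] at this

lemma chainB : ∀ A P B : ℕ,
    STMT (3 * A + 3 + 2 * P + B) (2 * A + 2 + P) (2 * A + 2 + P + B)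
      (6 ^ (A + 1) * 4 ^ P) := by
  intro A P B
  induction B with
  | zero => simpa using chainP A P
  | succ B ih =>
    have := stmt_stepDelta (by omega) (by omega) ih
    have e1 : 3 * A + 3 + 2 * P + B + 1 = 3 * A + 3 + 2 * P + (B + 1) := by ring
    have e2 : 2 * A + 2 + P + B + 1 = 2 * A + 2 + P + (B + 1) := by ring
    rwa [e1, e2] at this

lemma suppCard_zero {n : ℕ} : suppCard n 3 (0 : (Fin n → Fin 3) → ℝ) = 0 := by
  rw [suppCard]
  simp


/-- If `0 ≤ i ≤ j ≤ n`, `i + j > n` and `i + 2j ≤ 2n`, then there is a nonzero function in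
`U_{[i,j]}(n,3)` whose support has cardinality exactly `2^{3(n-j)-i} · 3^{i+j-n}`. -/
theorem stmt5 (n i j : ℕ) (hn : 1 ≤ n) (hij : i ≤ j) (hjn : j ≤ n) (hsum : n < i + j)
    (hsum2 : i + 2 * j ≤ 2 * n) :
    ∃ f : (Fin n → Fin 3) → ℝ, inUIJ n 3 i j f ∧ f ≠ 0 ∧
      suppCard n 3 f = 2 ^ (3 * (n - j) - i) * 3 ^ (i + j - n) := by
  have key := chainB (i + j - n - 1) (2 * n - (i + 2 * j)) (j - i)
  have e1 : 3 * (i + j - n - 1) + 3 + 2 * (2 * n - (i + 2 * j)) + (j - i) = n := by omega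
  have e2 : 2 * (i + j - n - 1) + 2 + (2 * n - (i + 2 * j)) = i := by omega
  have e3 : 2 * (i + j - n - 1) + 2 + (2 * n - (i + 2 * j)) + (j - i) = j := by omega
  have e4 : 6 ^ (i + j - n - 1 + 1) * 4 ^ (2 * n - (i + 2 * j))
      = 2 ^ (3 * (n - j) - i) * 3 ^ (i + j - n) := by
    have h6 : (6 : ℕ) = 2 * 3 := by norm_num
    have h4 : (4 : ℕ) = 2 ^ 2 := by norm_num
    rw [h6, h4, mul_pow, ← pow_mul]
    have hA : i + j - n - 1 + 1 = i + j - n := by omega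
    rw [hA]
    rw [mul_comm (2 ^ (i + j - n)) (3 ^ (i + j - n)), mul_assoc, ← pow_add]
    rw [mul_comm (3 ^ (i + j - n)) _]
    congr 2
    omega
  rw [e1, e3, e2, e4] at key
  obtain ⟨F, hU, hS⟩ := key
  refine ⟨F, hU, ?_, hS⟩
  intro h0
  rw [h0, suppCard_zero] at hS
  have : 0 < 2 ^ (3 * (n - j) - i) * 3 ^ (i + j - n) := by positivity
  omega
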